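/- Let Q be a symmetric n×n real matrix, d ∈ ℝⁿ, A ∈ ℝ^{m×n} with m ≥ n and with A_{1:n} (the first n rows) invertible, and b ∈ ℝᵐ. Let 1 ≤ k ≤ n, let x̄ ∈ ℝⁿ satisfy A_{1:k}x̄ = b_{1:k}, and let λ̄ ∈ ℝ^k satisfy Qx̄ + d = −Σ_{i=1}^{k} λ̄_i a_i, where a_i is the transpose of the i-th row of A. Define R := (A_{1:n}^{-1})ᵀ Q A_{1:n}^{-1}, p := −(A_{1:n}^{-1})ᵀ d − (A_{1:n}^{-1})ᵀ Q A_{1:n}^{-1} b_{1:n}, and r := (Q A_{1:n}^{-1} b_{1:n} + 2d)ᵀ A_{1:n}^{-1} b_{1:n}. If k < n, partition R = [R₁₁, R₁₂; R₁₂ᵀ, R₂₂] and p = (p₁; p₂) with blocks of sizes k and n−k, and assume R₂₂ is invertible; define q := (p₁ − R₁₂R₂₂^{-1}p₂; 0) ∈ ℝⁿ and υ := r − p₂ᵀR₂₂^{-1}p₂; if k = n set q := p and υ := r. Then q_i = λ̄_i for i = 1,…,k, q_i = 0 for i > k, and υ = Φ(x̄) = x̄ᵀQx̄ + 2dᵀx̄.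 -/
import Mathlib


open Matrix

/-- Embedding of the first `k` indices into `Fin n`. -/
def low {n k : ℕ} (hkn : k ≤ n) : Fin k → Fin n := Fin.castLE hkn

/-- Embedding of the last `n − k` indices into `Fin n`. -/
def high {n k : ℕ} (hkn : k ≤ n) : Fin (n - k) → Fin n :=
  fun i => ⟨k + (i : ℕ), by have := i.2; omega⟩

/-- The submatrix `A_{1:n}` of the first `n` rows of `A`. -/
def An {n m : ℕ} (hmn : n ≤ m) (A : Matrix (Fin m) (Fin n) ℝ) :
    Matrix (Fin n) (Fin n) ℝ :=
  A.submatrix (Fin.castLE hmn) id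

/-- The subvector `b_{1:n}`. -/
def bn {n m : ℕ} (hmn : n ≤ m) (b : Fin m → ℝ) : Fin n → ℝ :=
  fun i => b (Fin.castLE hmn i)

/-- `R := (A_{1:n}⁻¹)ᵀ Q A_{1:n}⁻¹`. -/
noncomputable def Rmat {n m : ℕ} (hmn : n ≤ m) (Q : Matrix (Fin n) (Fin n) ℝ)
    (A : Matrix (Fin m) (Fin n) ℝ) : Matrix (Fin n) (Fin n) ℝ :=
  ((An hmn A)⁻¹)ᵀ * Q * (An hmn A)⁻¹

/-- `p := −(A_{1:n}⁻¹)ᵀ d − (A_{1:n}⁻¹)ᵀ Q A_{1:n}⁻¹ b_{1:n}`. -/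
noncomputable def pVec {n m : ℕ} (hmn : n ≤ m) (Q : Matrix (Fin n) (Fin n) ℝ)
    (d : Fin n → ℝ) (A : Matrix (Fin m) (Fin n) ℝ) (b : Fin m → ℝ) : Fin n → ℝ :=
  -(((An hmn A)⁻¹)ᵀ *ᵥ d) - (((An hmn A)⁻¹)ᵀ * Q * (An hmn A)⁻¹) *ᵥ bn hmn b

/-- `r := (Q A_{1:n}⁻¹ b_{1:n} + 2d)ᵀ A_{1:n}⁻¹ b_{1:n}`. -/
noncomputable def rVal {n m : ℕ} (hmn : n ≤ m) (Q : Matrix (Fin n) (Fin n) ℝ)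
    (d : Fin n → ℝ) (A : Matrix (Fin m) (Fin n) ℝ) (b : Fin m → ℝ) : ℝ :=
  (Q *ᵥ ((An hmn A)⁻¹ *ᵥ bn hmn b) + (2 : ℝ) • d) ⬝ᵥ ((An hmn A)⁻¹ *ᵥ bn hmn b)

/-- `q := (p₁ − R₁₂R₂₂⁻¹p₂; 0)` (which reduces to `q = p` when `k = n`, since then
the second block is empty). -/
noncomputable def qVec {n m k : ℕ} (hmn : n ≤ m) (hkn : k ≤ n)
    (Q : Matrix (Fin n) (Fin n) ℝ) (d : Fin n → ℝ)
    (A : Matrix (Fin m) (Fin n) ℝ) (b : Fin m → ℝ) : Fin n → ℝ :=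
  fun j =>
    if hj : (j : ℕ) < k then
      (pVec hmn Q d A b ∘ low hkn -
        (Rmat hmn Q A).submatrix (low hkn) (high hkn) *ᵥ
          (((Rmat hmn Q A).submatrix (high hkn) (high hkn))⁻¹ *ᵥ
            (pVec hmn Q d A b ∘ high hkn))) ⟨(j : ℕ), hj⟩
    else 0

/-- `υ := r − p₂ᵀR₂₂⁻¹p₂` (which reduces to `υ = r` when `k = n`). -/
noncomputable def upsilonVal {n m k : ℕ} (hmn : n ≤ m) (hkn : k ≤ n)
    (Q : Matrix (Fin n) (Fin n) ℝ) (d : Fin n → ℝ)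
    (A : Matrix (Fin m) (Fin n) ℝ) (b : Fin m → ℝ) : ℝ :=
  rVal hmn Q d A b -
    (pVec hmn Q d A b ∘ high hkn) ⬝ᵥ
      (((Rmat hmn Q A).submatrix (high hkn) (high hkn))⁻¹ *ᵥ
        (pVec hmn Q d A b ∘ high hkn))

lemma sum_low_high {n k : ℕ} (hkn : k ≤ n) (f : Fin n → ℝ) :
    ∑ j, f j = ∑ i : Fin k, f (low hkn i) + ∑ i : Fin (n - k), f (high hkn i) := by
  have h : k + (n - k) = n := by omega
  let e : Fin k ⊕ Fin (n - k) ≃ Fin n := finSumFinEquiv.trans (finCongr h)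
  rw [← e.sum_comp f, Fintype.sum_sum_type]
  rfl

/-- Lemma `l:q=lambda`. At a point `x̄` with `A_{1:k}x̄ = b_{1:k}`
and `Qx̄ + d = −Σ_{i≤k} λ̄_i a_i`, the data `(q, υ)` obtained after the change of
coordinates `y = b_{1:n} − A_{1:n}x` satisfy `q_i = λ̄_i` for `i ≤ k`, `q_i = 0` for
`i > k`, and `υ = Φ(x̄)`. -/
theorem qVec_eq_lambda_and_upsilon_eq_Phi {n m k : ℕ}
    (hmn : n ≤ m) (hk1 : 1 ≤ k) (hkn : k ≤ n)
    (Q : Matrix (Fin n) (Fin n) ℝ) (hQ : Q.IsSymm)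
    (d : Fin n → ℝ) (A : Matrix (Fin m) (Fin n) ℝ) (b : Fin m → ℝ)
    (hinv : IsUnit (An hmn A).det)
    (xbar : Fin n → ℝ)
    (hact : ∀ i : Fin m, (i : ℕ) < k → (A *ᵥ xbar) i = b i)
    (lam : Fin k → ℝ)
    (hstat : Q *ᵥ xbar + d = -(∑ i : Fin k, lam i • A (Fin.castLE (hkn.trans hmn) i)))
    (hR22 : IsUnit ((Rmat hmn Q A).submatrix (high hkn) (high hkn)).det) :
    (∀ i : Fin k, qVec hmn hkn Q d A b (low hkn i) = lam i) ∧
    (∀ j : Fin n, k ≤ (j : ℕ) → qVec hmn hkn Q d A b j = 0) ∧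
    upsilonVal hmn hkn Q d A b = xbar ⬝ᵥ (Q *ᵥ xbar) + 2 * (d ⬝ᵥ xbar) := by
  classical
  set B := An hmn A with hBdef
  have hBinv : B⁻¹ * B = 1 := Matrix.nonsing_inv_mul B hinv
  have hBinv' : B * B⁻¹ = 1 := Matrix.mul_nonsing_inv B hinv
  set R := Rmat hmn Q A with hRdef
  set p := pVec hmn Q d A b with hpdef
  set ybar : Fin n → ℝ := bn hmn b - B *ᵥ xbar with hydef
  set lt : Fin n → ℝ := fun j => if h : (j : ℕ) < k then lam ⟨j, h⟩ else 0 with hltdef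
  have hlthigh : ∀ i : Fin (n - k), lt (high hkn i) = 0 := by
    intro i; simp [hltdef, high]
  have hltlow : ∀ i : Fin k, lt (low hkn i) = lam i := by
    intro i
    have : ((low hkn i : Fin n) : ℕ) < k := i.2
    simp only [hltdef, this, dif_pos]
    congr 1
  have hBt : Bᵀ *ᵥ lt = ∑ i : Fin k, lam i • A (Fin.castLE (hkn.trans hmn) i) := by
    funext j
    simp only [Matrix.mulVec, dotProduct, Matrix.transpose_apply, Finset.sum_apply,
      Pi.smul_apply, smul_eq_mul]
    rw [sum_low_high hkn (fun i => B i j * lt i)]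
    simp only [hlthigh, mul_zero, Finset.sum_const_zero, add_zero]
    refine Finset.sum_congr rfl fun i _ => ?_
    rw [hltlow i, hBdef]
    simp only [An, Matrix.submatrix_apply, id_eq, low, Fin.castLE_castLE]
    ring
  have hstat' : Q *ᵥ xbar + d = -(Bᵀ *ᵥ lt) := by rw [hBt]; exact hstat
  have e1 : B⁻¹ *ᵥ ybar = B⁻¹ *ᵥ bn hmn b - xbar := by
    rw [hydef, Matrix.mulVec_sub, Matrix.mulVec_mulVec, hBinv, Matrix.one_mulVec]
  have e5 : (B⁻¹)ᵀ *ᵥ (Bᵀ *ᵥ lt) = lt := by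
    rw [Matrix.mulVec_mulVec, ← Matrix.transpose_mul, hBinv', Matrix.transpose_one,
      Matrix.one_mulVec]
  have e3 : p = -((B⁻¹)ᵀ *ᵥ d) - (B⁻¹)ᵀ *ᵥ (Q *ᵥ (B⁻¹ *ᵥ bn hmn b)) := by
    rw [hpdef]
    show pVec hmn Q d A b = _
    rw [pVec, ← hBdef, Matrix.mulVec_mulVec, Matrix.mulVec_mulVec]
  have key : p + R *ᵥ ybar = lt := by
    have e2 : R *ᵥ ybar = (B⁻¹)ᵀ *ᵥ (Q *ᵥ (B⁻¹ *ᵥ bn hmn b)) - (B⁻¹)ᵀ *ᵥ (Q *ᵥ xbar) := by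
      have h0 : R *ᵥ ybar = (B⁻¹)ᵀ *ᵥ (Q *ᵥ (B⁻¹ *ᵥ ybar)) := by
        rw [hRdef]
        show Rmat hmn Q A *ᵥ ybar = _
        rw [Rmat, ← hBdef, Matrix.mulVec_mulVec, Matrix.mulVec_mulVec]
      rw [h0, e1, Matrix.mulVec_sub, Matrix.mulVec_sub]
    rw [e2, e3]
    have e4 : -((B⁻¹)ᵀ *ᵥ d) - (B⁻¹)ᵀ *ᵥ (Q *ᵥ (B⁻¹ *ᵥ bn hmn b)) +
        ((B⁻¹)ᵀ *ᵥ (Q *ᵥ (B⁻¹ *ᵥ bn hmn b)) - (B⁻¹)ᵀ *ᵥ (Q *ᵥ xbar)) =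
        -((B⁻¹)ᵀ *ᵥ (Q *ᵥ xbar) + (B⁻¹)ᵀ *ᵥ d) := by abel
    rw [e4, ← Matrix.mulVec_add, hstat', Matrix.mulVec_neg, e5, neg_neg]
  have hylow : ∀ i : Fin k, ybar (low hkn i) = 0 := by
    intro i
    have hik : ((Fin.castLE hmn (low hkn i) : Fin m) : ℕ) < k := i.2
    have h := hact _ hik
    rw [hydef]
    simp only [Pi.sub_apply, bn]
    rw [sub_eq_zero, ← h]
    simp [hBdef, An, Matrix.mulVec, dotProduct, Matrix.submatrix_apply]
  have hRy_split : ∀ j : Fin n,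
      (R *ᵥ ybar) j = ∑ i : Fin (n - k), R j (high hkn i) * ybar (high hkn i) := by
    intro j
    show (R j) ⬝ᵥ ybar = _
    rw [dotProduct, sum_low_high hkn (fun i => R j i * ybar i)]
    simp [hylow]
  have hblock : (R.submatrix (high hkn) (high hkn)) *ᵥ (ybar ∘ high hkn)
      = -(p ∘ high hkn) := by
    funext j
    have hkey := congrFun key (high hkn j)
    simp only [Pi.add_apply, hlthigh j] at hkey
    have : (R *ᵥ ybar) (high hkn j)
        = ((R.submatrix (high hkn) (high hkn)) *ᵥ (ybar ∘ high hkn)) j := by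
      rw [hRy_split]
      simp [Matrix.mulVec, dotProduct, Matrix.submatrix_apply]
    rw [this] at hkey
    simp only [Pi.neg_apply, Function.comp_apply]
    linarith
  have hy2 : ((R.submatrix (high hkn) (high hkn))⁻¹) *ᵥ (p ∘ high hkn)
      = -(ybar ∘ high hkn) := by
    have h := congrArg (fun v => ((R.submatrix (high hkn) (high hkn))⁻¹) *ᵥ v) hblock
    simp only [Matrix.mulVec_mulVec, Matrix.nonsing_inv_mul _ hR22, Matrix.one_mulVec,
      Matrix.mulVec_neg] at h
    rw [← neg_eq_iff_eq_neg] at h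
    rw [← h]
  refine ⟨?_, ?_, ?_⟩
  · intro i
    have hlow : ((low hkn i : Fin n) : ℕ) < k := i.2
    rw [qVec]
    simp only [← hpdef, ← hRdef]
    rw [dif_pos hlow]
    have hidx : (⟨((low hkn i : Fin n) : ℕ), hlow⟩ : Fin k) = i := Fin.ext rfl
    rw [hidx, hy2]
    simp only [Matrix.mulVec_neg, Pi.sub_apply, Pi.neg_apply, Function.comp_apply,
      sub_neg_eq_add]
    have hR12 : (R.submatrix (low hkn) (high hkn) *ᵥ (ybar ∘ high hkn)) i
        = (R *ᵥ ybar) (low hkn i) := by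
      rw [hRy_split]
      simp [Matrix.mulVec, dotProduct, Matrix.submatrix_apply]
    rw [hR12, ← hltlow i, ← key]
    simp
  · intro j hj
    rw [qVec]
    simp [Nat.not_lt.mpr hj]
  · rw [upsilonVal]
    simp only [← hpdef, ← hRdef]
    rw [hy2, dotProduct_neg, sub_neg_eq_add]
    have hdp : (p ∘ high hkn) ⬝ᵥ (ybar ∘ high hkn) = p ⬝ᵥ ybar := by
      rw [dotProduct, dotProduct, sum_low_high hkn (fun i => p i * ybar i)]
      simp [hylow]
    rw [hdp]
    set c : Fin n → ℝ := B⁻¹ *ᵥ bn hmn b with hcdef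
    set u : Fin n → ℝ := B⁻¹ *ᵥ ybar with hudef
    have hx : xbar = c - u := by rw [e1]; abel
    have hBu : B *ᵥ u = ybar := by
      rw [hudef, Matrix.mulVec_mulVec, hBinv', Matrix.one_mulVec]
    have hsymm : ∀ v w : Fin n → ℝ, v ⬝ᵥ (Q *ᵥ w) = (Q *ᵥ v) ⬝ᵥ w := by
      intro v w
      rw [Matrix.dotProduct_mulVec, ← Matrix.mulVec_transpose, hQ.eq]
    have horth : (Q *ᵥ c) ⬝ᵥ u - (Q *ᵥ u) ⬝ᵥ u + d ⬝ᵥ u = 0 := by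
      have hlty : lt ⬝ᵥ ybar = 0 := by
        rw [dotProduct, sum_low_high hkn (fun i => lt i * ybar i)]
        simp [hylow, hlthigh]
      have h0 : (Q *ᵥ xbar + d) ⬝ᵥ u = 0 := by
        rw [hstat', neg_dotProduct, Matrix.mulVec_transpose,
          ← Matrix.dotProduct_mulVec, hBu, hlty, neg_zero]
      rw [hx, Matrix.mulVec_sub, add_dotProduct, sub_dotProduct] at h0
      linarith
    have hpdot : p ⬝ᵥ ybar = -(d ⬝ᵥ u) - (Q *ᵥ c) ⬝ᵥ u := by
      have t1 : ((B⁻¹)ᵀ *ᵥ d) ⬝ᵥ ybar = d ⬝ᵥ u := by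
        rw [Matrix.mulVec_transpose, ← Matrix.dotProduct_mulVec, ← hudef]
      have t2 : ((B⁻¹)ᵀ *ᵥ (Q *ᵥ c)) ⬝ᵥ ybar = (Q *ᵥ c) ⬝ᵥ u := by
        rw [Matrix.mulVec_transpose, ← Matrix.dotProduct_mulVec, ← hudef]
      rw [e3, sub_dotProduct, neg_dotProduct, t1, t2]
    have hrval : rVal hmn Q d A b = (Q *ᵥ c) ⬝ᵥ c + 2 * (d ⬝ᵥ c) := by
      rw [rVal, ← hBdef, ← hcdef, add_dotProduct, smul_dotProduct,
        smul_eq_mul]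
    rw [hrval, hpdot, hx]
    rw [Matrix.mulVec_sub, dotProduct_sub, sub_dotProduct,
      sub_dotProduct, dotProduct_sub]
    have s1 : c ⬝ᵥ (Q *ᵥ c) = (Q *ᵥ c) ⬝ᵥ c := hsymm c c
    have s2 : c ⬝ᵥ (Q *ᵥ u) = (Q *ᵥ c) ⬝ᵥ u := hsymm c u
    have s3 : u ⬝ᵥ (Q *ᵥ c) = (Q *ᵥ u) ⬝ᵥ c := hsymm u c
    have s4 : u ⬝ᵥ (Q *ᵥ u) = (Q *ᵥ u) ⬝ᵥ u := hsymm u u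
    have s5 : (Q *ᵥ u) ⬝ᵥ c = (Q *ᵥ c) ⬝ᵥ u := by
      rw [dotProduct_comm, hsymm]
    linarith
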